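/- Let C = (φ,Φ) be a skew-evolution semiflow on Y = X × V. If C is integrally stable and has bounded exponential growth, then C is stable. -/

import Mathlib

open MeasureTheory

noncomputable section

/-- An evolution semiflow on `X`: `φ(t,t,x) = x` for `t ≥ 0` and
`φ(t,s,φ(s,t₀,x)) = φ(t,t₀,x)` for `t ≥ s ≥ t₀ ≥ 0`. -/
def IsEvolutionSemiflow {X : Type*} (φ : ℝ → ℝ → X → X) : Prop :=
  (∀ t : ℝ, ∀ x : X, 0 ≤ t → φ t t x = x) ∧
  (∀ t s t₀ : ℝ, ∀ x : X, 0 ≤ t₀ → t₀ ≤ s → s ≤ t → φ t s (φ s t₀ x) = φ t t₀ x)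

/-- An evolution cocycle over an evolution semiflow `φ`:
`Φ(t,t,x) = Id` for `t ≥ 0` and `Φ(t,s,φ(s,t₀,x)) ∘ Φ(s,t₀,x) = Φ(t,t₀,x)`
for `t ≥ s ≥ t₀ ≥ 0`. The pair `(φ, Φ)` is a skew-evolution semiflow. -/
def IsEvolutionCocycle {X V : Type*} [NormedAddCommGroup V] [NormedSpace ℝ V]
    (φ : ℝ → ℝ → X → X) (Φ : ℝ → ℝ → X → V →L[ℝ] V) : Prop :=
  (∀ t : ℝ, ∀ x : X, 0 ≤ t → Φ t t x = ContinuousLinearMap.id ℝ V) ∧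
  (∀ t s t₀ : ℝ, ∀ x : X, 0 ≤ t₀ → t₀ ≤ s → s ≤ t →
    (Φ t s (φ s t₀ x)).comp (Φ s t₀ x) = Φ t t₀ x)

/-- Uniform exponential stability. -/
def IsUnifExpStable {X V : Type*} [NormedAddCommGroup V] [NormedSpace ℝ V]
    (Φ : ℝ → ℝ → X → V →L[ℝ] V) : Prop :=
  ∃ N α : ℝ, 1 ≤ N ∧ 0 < α ∧
    ∀ t s t₀ : ℝ, ∀ x : X, ∀ v : V, 0 ≤ t₀ → t₀ ≤ s → s ≤ t →
      ‖Φ t t₀ x v‖ ≤ N * Real.exp (-α * (t - s)) * ‖Φ s t₀ x v‖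

/-- Barreira-Valls exponential stability. -/
def IsBarreiraVallsExpStable {X V : Type*} [NormedAddCommGroup V] [NormedSpace ℝ V]
    (Φ : ℝ → ℝ → X → V →L[ℝ] V) : Prop :=
  ∃ N α β : ℝ, 1 ≤ N ∧ 0 < α ∧ α ≤ β ∧
    ∀ t s t₀ : ℝ, ∀ x : X, ∀ v : V, 0 ≤ t₀ → t₀ ≤ s → s ≤ t →
      ‖Φ t t₀ x v‖ ≤ N * Real.exp (-α * t) * Real.exp (β * s) * ‖Φ s t₀ x v‖

/-- (Nonuniform) exponential stability. -/
def IsExpStable {X V : Type*} [NormedAddCommGroup V] [NormedSpace ℝ V]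
    (Φ : ℝ → ℝ → X → V →L[ℝ] V) : Prop :=
  ∃ N : ℝ → ℝ, ∃ α : ℝ, (∀ s : ℝ, 1 ≤ N s) ∧ 0 < α ∧
    ∀ t s t₀ : ℝ, ∀ x : X, ∀ v : V, 0 ≤ t₀ → t₀ ≤ s → s ≤ t →
      ‖Φ t t₀ x v‖ ≤ N s * Real.exp (-α * t) * ‖Φ s t₀ x v‖

/-- (Nonuniform) stability. -/
def IsStable {X V : Type*} [NormedAddCommGroup V] [NormedSpace ℝ V]
    (Φ : ℝ → ℝ → X → V →L[ℝ] V) : Prop :=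
  ∃ N : ℝ → ℝ, (∀ s : ℝ, 1 ≤ N s) ∧
    ∀ t s t₀ : ℝ, ∀ x : X, ∀ v : V, 0 ≤ t₀ → t₀ ≤ s → s ≤ t →
      ‖Φ t t₀ x v‖ ≤ N s * ‖Φ s t₀ x v‖

/-- Exponential growth: `M, ω : ℝ₊ → [1,∞)` nondecreasing with
`‖Φ(t,t₀,x)v‖ ≤ M(s) e^{ω(t-s)} ‖Φ(s,t₀,x)v‖` for `t ≥ s ≥ t₀ ≥ 0`. -/
def HasExpGrowth {X V : Type*} [NormedAddCommGroup V] [NormedSpace ℝ V]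
    (Φ : ℝ → ℝ → X → V →L[ℝ] V) : Prop :=
  ∃ M ω : ℝ → ℝ, MonotoneOn M (Set.Ici 0) ∧ MonotoneOn ω (Set.Ici 0) ∧
    (∀ s : ℝ, 0 ≤ s → 1 ≤ M s) ∧ (∀ s : ℝ, 0 ≤ s → 1 ≤ ω s) ∧
    ∀ t s t₀ : ℝ, ∀ x : X, ∀ v : V, 0 ≤ t₀ → t₀ ≤ s → s ≤ t →
      ‖Φ t t₀ x v‖ ≤ M s * Real.exp (ω (t - s)) * ‖Φ s t₀ x v‖

/-- Bounded exponential growth: exponential growth where `M` can be chosen bounded. -/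
def HasBoundedExpGrowth {X V : Type*} [NormedAddCommGroup V] [NormedSpace ℝ V]
    (Φ : ℝ → ℝ → X → V →L[ℝ] V) : Prop :=
  ∃ M ω : ℝ → ℝ, MonotoneOn M (Set.Ici 0) ∧ MonotoneOn ω (Set.Ici 0) ∧
    (∀ s : ℝ, 0 ≤ s → 1 ≤ M s) ∧ (∀ s : ℝ, 0 ≤ s → 1 ≤ ω s) ∧
    (∃ K : ℝ, ∀ s : ℝ, 0 ≤ s → M s ≤ K) ∧
    ∀ t s t₀ : ℝ, ∀ x : X, ∀ v : V, 0 ≤ t₀ → t₀ ≤ s → s ≤ t →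
      ‖Φ t t₀ x v‖ ≤ M s * Real.exp (ω (t - s)) * ‖Φ s t₀ x v‖

/-- Integral stability: `∫_s^∞ ‖Φ(t,t₀,x)v‖ dt ≤ D(s) ‖Φ(s,t₀,x)v‖` for `s ≥ t₀ ≥ 0`. -/
def IsIntegrallyStable {X V : Type*} [NormedAddCommGroup V] [NormedSpace ℝ V]
    (Φ : ℝ → ℝ → X → V →L[ℝ] V) : Prop :=
  ∃ D : ℝ → ℝ, (∀ s : ℝ, 0 ≤ s → 0 < D s) ∧
    ∀ s t₀ : ℝ, ∀ x : X, ∀ v : V, 0 ≤ t₀ → t₀ ≤ s →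
      IntegrableOn (fun t => ‖Φ t t₀ x v‖) (Set.Ioi s) ∧
      ∫ t in Set.Ioi s, ‖Φ t t₀ x v‖ ≤ D s * ‖Φ s t₀ x v‖

/-- Exponential integral stability:
`∫_s^∞ e^{d(t-s)} ‖Φ(t,s,x)v‖ dt ≤ D(s) ‖v‖` for `s ≥ 0`. -/
def IsExpIntegrallyStable {X V : Type*} [NormedAddCommGroup V] [NormedSpace ℝ V]
    (Φ : ℝ → ℝ → X → V →L[ℝ] V) : Prop :=
  ∃ D : ℝ → ℝ, ∃ d : ℝ, (∀ s : ℝ, 0 ≤ s → 0 < D s) ∧ 0 < d ∧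
    ∀ s : ℝ, ∀ x : X, ∀ v : V, 0 ≤ s →
      IntegrableOn (fun t => Real.exp (d * (t - s)) * ‖Φ t s x v‖) (Set.Ioi s) ∧
      ∫ t in Set.Ioi s, Real.exp (d * (t - s)) * ‖Φ t s x v‖ ≤ D s * ‖v‖

/-- Strong measurability: for every `t₀ ≥ 0`, `x`, `v` the map
`s ↦ ‖Φ(s,t₀,x)v‖` is measurable on `[t₀,∞)`. -/
def IsStronglyMeasurable {X V : Type*} [NormedAddCommGroup V] [NormedSpace ℝ V]
    (Φ : ℝ → ℝ → X → V →L[ℝ] V) : Prop :=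
  ∀ t₀ : ℝ, ∀ x : X, ∀ v : V, 0 ≤ t₀ →
    Measurable ((Set.Ici t₀).restrict fun s => ‖Φ s t₀ x v‖)

/-- `*`-strong measurability: for every `t ≥ t₀ ≥ 0`, `x` and `v*` in the dual, the map
`s ↦ ‖Φ(t,s,φ(s,t₀,x))* v*‖` is measurable on `[t₀,t]` (here the adjoint applied to
`g : V →L[ℝ] ℝ` is `g ∘ Φ(t,s,φ(s,t₀,x))`). -/
def IsStarStronglyMeasurable {X V : Type*} [NormedAddCommGroup V] [NormedSpace ℝ V]
    (φ : ℝ → ℝ → X → X) (Φ : ℝ → ℝ → X → V →L[ℝ] V) : Prop :=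
  ∀ t t₀ : ℝ, ∀ x : X, ∀ g : V →L[ℝ] ℝ, 0 ≤ t₀ → t₀ ≤ t →
    Measurable ((Set.Icc t₀ t).restrict fun s => ‖g.comp (Φ t s (φ s t₀ x))‖)

/-- Proposition: an integrally stable skew-evolution semiflow with bounded
exponential growth is stable. -/
theorem stmt0 {X V : Type*} [MetricSpace X]
    [NormedAddCommGroup V] [NormedSpace ℝ V] [CompleteSpace V]
    (φ : ℝ → ℝ → X → X) (Φ : ℝ → ℝ → X → V →L[ℝ] V)
    (hφ : IsEvolutionSemiflow φ) (hΦ : IsEvolutionCocycle φ Φ)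
    (his : IsIntegrallyStable Φ) (hg : HasBoundedExpGrowth Φ) :
    IsStable Φ := by
  obtain ⟨D, hDpos, hint⟩ := his
  obtain ⟨M, ω, hM, hω, hM1, hω1, ⟨K, hK⟩, hgr⟩ := hg
  have hK1 : (1:ℝ) ≤ K := le_trans (hM1 0 le_rfl) (hK 0 le_rfl)
  have hexp1 : (1:ℝ) ≤ Real.exp (ω 1) :=
    Real.one_le_exp (le_trans zero_le_one (hω1 1 zero_le_one))
  refine ⟨fun s => K * Real.exp (ω 1) * max (D s) 1, ?_, ?_⟩
  · intro s
    have h1 : (1:ℝ) ≤ max (D s) 1 := le_max_right _ _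
    calc (1:ℝ) ≤ K * Real.exp (ω 1) := by nlinarith
      _ ≤ K * Real.exp (ω 1) * max (D s) 1 :=
          le_mul_of_one_le_right (by positivity) h1
  · intro t s t₀ x v ht₀ hts hst
    have hs0 : (0:ℝ) ≤ s := le_trans ht₀ hts
    have hΦs : (0:ℝ) ≤ ‖Φ s t₀ x v‖ := norm_nonneg _
    have hmax1 : (1:ℝ) ≤ max (D s) 1 := le_max_right _ _
    by_cases h : t ≤ s + 1
    · have h1 := hgr t s t₀ x v ht₀ hts hst
      have hωle : ω (t - s) ≤ ω 1 := hω (by simp; linarith) (by simp) (by linarith)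
      have hMle : M s ≤ K := hK s hs0
      have hexp : Real.exp (ω (t - s)) ≤ Real.exp (ω 1) := Real.exp_le_exp.2 hωle
      have hMpos : (1:ℝ) ≤ M s := hM1 s hs0
      calc ‖Φ t t₀ x v‖ ≤ M s * Real.exp (ω (t - s)) * ‖Φ s t₀ x v‖ := h1
        _ ≤ K * Real.exp (ω 1) * ‖Φ s t₀ x v‖ := by
            apply mul_le_mul_of_nonneg_right _ hΦs
            apply mul_le_mul hMle hexp (Real.exp_pos _).le (by linarith)
        _ ≤ K * Real.exp (ω 1) * max (D s) 1 * ‖Φ s t₀ x v‖ := by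
            apply mul_le_mul_of_nonneg_right _ hΦs
            exact le_mul_of_one_le_right (by positivity) hmax1
    · push_neg at h
      obtain ⟨hIg, hIb⟩ := hint s t₀ x v ht₀ hts
      set c := ‖Φ t t₀ x v‖ with hc
      set g : ℝ → ℝ := fun τ => ‖Φ τ t₀ x v‖ with hgdef
      have hsub : Set.Ioc (t - 1) t ⊆ Set.Ioi s := fun τ hτ => by
        simp only [Set.mem_Ioi]; have := hτ.1; linarith
      have hIoc : IntegrableOn g (Set.Ioc (t - 1) t) := hIg.mono_set hsub
      have hpt : ∀ τ ∈ Set.Ioc (t - 1) t, c ≤ K * Real.exp (ω 1) * g τ := by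
        intro τ hτ
        obtain ⟨hτ1, hτ2⟩ := hτ
        have hτt₀ : t₀ ≤ τ := by linarith
        have h1 := hgr t τ t₀ x v ht₀ hτt₀ hτ2
        have hτ0 : (0:ℝ) ≤ τ := le_trans ht₀ hτt₀
        have hωle : ω (t - τ) ≤ ω 1 := hω (by simp; linarith) (by simp) (by linarith)
        have hexp : Real.exp (ω (t - τ)) ≤ Real.exp (ω 1) := Real.exp_le_exp.2 hωle
        have hMle : M τ ≤ K := hK τ hτ0
        have hMpos : (1:ℝ) ≤ M τ := hM1 τ hτ0
        calc c ≤ M τ * Real.exp (ω (t - τ)) * g τ := h1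
          _ ≤ K * Real.exp (ω 1) * g τ := by
              apply mul_le_mul_of_nonneg_right _ (norm_nonneg _)
              apply mul_le_mul hMle hexp (Real.exp_pos _).le (by linarith)
      have hvol : (volume (Set.Ioc (t - 1) t)).toReal = 1 := by
        rw [Real.volume_Ioc]
        norm_num
      have hcint : c = ∫ τ in Set.Ioc (t - 1) t, c := by
        rw [setIntegral_const, measureReal_def, hvol, one_smul]
      have step1 : c ≤ ∫ τ in Set.Ioc (t - 1) t, K * Real.exp (ω 1) * g τ := by
        rw [hcint]
        apply setIntegral_mono_on (integrableOn_const (by simp))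
          (hIoc.const_mul _) measurableSet_Ioc hpt
      have step2 : ∫ τ in Set.Ioc (t - 1) t, K * Real.exp (ω 1) * g τ
          = K * Real.exp (ω 1) * ∫ τ in Set.Ioc (t - 1) t, g τ := by
        rw [MeasureTheory.integral_const_mul]
      have step3 : ∫ τ in Set.Ioc (t - 1) t, g τ ≤ ∫ τ in Set.Ioi s, g τ := by
        apply setIntegral_mono_set hIg
        · filter_upwards with τ using norm_nonneg _
        · exact HasSubset.Subset.eventuallyLE hsub
      have hpos : (0:ℝ) < K * Real.exp (ω 1) := by positivity
      calc c ≤ K * Real.exp (ω 1) * ∫ τ in Set.Ioc (t - 1) t, g τ := by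
              rw [← step2]; exact step1
        _ ≤ K * Real.exp (ω 1) * ∫ τ in Set.Ioi s, g τ :=
              mul_le_mul_of_nonneg_left step3 hpos.le
        _ ≤ K * Real.exp (ω 1) * (D s * ‖Φ s t₀ x v‖) :=
              mul_le_mul_of_nonneg_left hIb hpos.le
        _ ≤ K * Real.exp (ω 1) * max (D s) 1 * ‖Φ s t₀ x v‖ := by
              rw [mul_assoc (K * Real.exp (ω 1))]
              apply mul_le_mul_of_nonneg_left _ hpos.le
              exact mul_le_mul_of_nonneg_right (le_max_left _ _) hΦs
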